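/- Let (K,v) be a valued field whose value group is exactly ℤ, let n ∈ ℕ⁺, and let q be an n-variable quadratic form with all coefficients in O_v such that the residue form q̄ over Kv is anisotropic. Let π ∈ K be such that v(π) is odd. Then the 2n-dimensional quadratic form q ⊥ πq over K, given by (x,y) ↦ q(x) + π·q(y) on Kⁿ × Kⁿ, is anisotropic. -/

import Mathlib

private theorem key_val {K : Type*} [Field K] (v : Valuation K (WithZero (Multiplicative ℤ)))
    {n : ℕ} (a : Fin n → Fin n → v.valuationSubring)
    (hani : ∀ x : Fin n → IsLocalRing.ResidueField v.valuationSubring,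
      (∑ i, ∑ j, IsLocalRing.residue v.valuationSubring (a i j) * x i * x j) = 0 → x = 0)
    (x : Fin n → K) (hx : x ≠ 0) :
    ∃ c : Multiplicative ℤ,
      v (∑ i, ∑ j, (a i j : K) * x i * x j) = ((c * c : Multiplicative ℤ) : WithZero (Multiplicative ℤ)) := by
  obtain ⟨i1, hi1⟩ := Function.ne_iff.mp hx
  obtain ⟨i0, -, hmax⟩ := Finset.exists_max_image Finset.univ (fun i => v (x i))
    ⟨i1, Finset.mem_univ i1⟩
  have hu : x i0 ≠ 0 := by
    intro h0
    have := hmax i1 (Finset.mem_univ i1)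
    rw [h0] at this
    simp only [map_zero, le_zero_iff] at this
    exact hi1 ((v.zero_iff).mp this)
  have hvu : v (x i0) ≠ 0 := by simpa using hu
  set u := x i0 with hudef
  have hb : ∀ i, x i / u ∈ v.valuationSubring := by
    intro i
    rw [Valuation.mem_valuationSubring_iff, map_div₀]
    exact div_le_one_of_le₀ (hmax i (Finset.mem_univ i)) (zero_le')
  set b : Fin n → v.valuationSubring := fun i => ⟨x i / u, hb i⟩ with hbdef
  have hb0 : b i0 = 1 := by
    apply Subtype.ext
    simp [hbdef, ← hudef, div_self hu]
  set Q : v.valuationSubring := ∑ i, ∑ j, a i j * b i * b j with hQdef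
  have hres : IsLocalRing.residue v.valuationSubring Q ≠ 0 := by
    intro h0
    have : (fun i => IsLocalRing.residue v.valuationSubring (b i)) = 0 := by
      apply hani
      rw [← h0, hQdef]
      simp [map_sum, map_mul]
    have h1 : IsLocalRing.residue v.valuationSubring (b i0) = 0 := congrFun this i0
    rw [hb0, map_one] at h1
    exact one_ne_zero h1
  have hQunit : IsUnit Q := (IsLocalRing.residue_ne_zero_iff_isUnit Q).mp hres
  have hvQ : v (Q : K) = 1 := by
    obtain ⟨r, hr⟩ := hQunit.exists_right_inv
    have hr' : (Q : K) * (r : K) = 1 := by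
      rw [← Subring.coe_mul, hr]; rfl
    have h1 : v (Q : K) * v (r : K) = 1 := by rw [← map_mul, hr', map_one]
    have hQ1 : v (Q : K) ≤ 1 := Q.2
    have hr1 : v (r : K) ≤ 1 := r.2
    refine le_antisymm hQ1 ?_
    calc (1 : WithZero (Multiplicative ℤ)) = v (Q : K) * v (r : K) := h1.symm
      _ ≤ v (Q : K) * 1 := mul_le_mul_right hr1 _
      _ = v (Q : K) := mul_one _
  have hsum : (∑ i, ∑ j, (a i j : K) * x i * x j) = (u * u) * (Q : K) := by
    rw [hQdef]
    push_cast
    rw [Finset.mul_sum]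
    refine Finset.sum_congr rfl fun i _ => ?_
    rw [Finset.mul_sum]
    refine Finset.sum_congr rfl fun j _ => ?_
    simp only [hbdef]
    field_simp
  obtain ⟨c, hc⟩ : ∃ c : Multiplicative ℤ, v u = (c : WithZero (Multiplicative ℤ)) := by
    obtain ⟨c, hc⟩ := WithZero.ne_zero_iff_exists.mp hvu
    exact ⟨c, hc.symm⟩
  refine ⟨c, ?_⟩
  rw [hsum, map_mul, map_mul, hvQ, mul_one, hc]
  norm_cast

theorem anisotropic_prod_of_anisotropic_residue
    {K : Type*} [Field K] (v : Valuation K (WithZero (Multiplicative ℤ)))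
    (hv : Function.Surjective v)
    (n : ℕ) (hn : 0 < n) (a : Fin n → Fin n → v.valuationSubring)
    (hani : ∀ x : Fin n → IsLocalRing.ResidueField v.valuationSubring,
      (∑ i, ∑ j, IsLocalRing.residue v.valuationSubring (a i j) * x i * x j) = 0 → x = 0)
    (π : K) (hπ : ∃ k : ℤ, Odd k ∧ v π = (Multiplicative.ofAdd k : Multiplicative ℤ)) :
    ∀ x : (Fin n → K) × (Fin n → K),
      (∑ i, ∑ j, (a i j : K) * x.1 i * x.1 j) +
          π * ∑ i, ∑ j, (a i j : K) * x.2 i * x.2 j = 0 →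
        x = 0 := by
  obtain ⟨k, hkodd, hπv⟩ := hπ
  intro x h
  by_contra hx
  have hcase : x.1 ≠ 0 ∨ x.2 ≠ 0 := by
    by_contra hc
    push_neg at hc
    exact hx (Prod.ext hc.1 hc.2)
  rcases eq_or_ne x.1 0 with h1 | h1
  · -- x.1 = 0, so x.2 ≠ 0
    have h2 : x.2 ≠ 0 := hcase.resolve_left (by simp [h1])
    obtain ⟨d, hd⟩ := key_val v a hani x.2 h2
    have hS1 : (∑ i, ∑ j, (a i j : K) * x.1 i * x.1 j) = 0 := by
      simp [h1]
    rw [hS1, zero_add] at h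
    have hπ0 : π ≠ 0 := by
      intro h0; rw [h0, map_zero] at hπv
      exact (WithZero.coe_ne_zero (a := (Multiplicative.ofAdd k : Multiplicative ℤ))) hπv.symm
    have hS2 : (∑ i, ∑ j, (a i j : K) * x.2 i * x.2 j) = 0 :=
      (mul_eq_zero.mp h).resolve_left hπ0
    rw [hS2, map_zero] at hd
    exact (WithZero.zero_ne_coe) hd
  · obtain ⟨c, hc⟩ := key_val v a hani x.1 h1
    rcases eq_or_ne x.2 0 with h2 | h2
    · have hS2 : (∑ i, ∑ j, (a i j : K) * x.2 i * x.2 j) = 0 := by simp [h2]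
      rw [hS2, mul_zero, add_zero] at h
      rw [h, map_zero] at hc
      exact (WithZero.zero_ne_coe) hc
    · obtain ⟨d, hd⟩ := key_val v a hani x.2 h2
      have hπS2 : v (π * ∑ i, ∑ j, (a i j : K) * x.2 i * x.2 j)
          = ((Multiplicative.ofAdd k * (d * d) : Multiplicative ℤ) : WithZero (Multiplicative ℤ)) := by
        rw [map_mul, hπv, hd]
        norm_cast
      have hne : v (∑ i, ∑ j, (a i j : K) * x.1 i * x.1 j)
          ≠ v (π * ∑ i, ∑ j, (a i j : K) * x.2 i * x.2 j) := by
        rw [hc, hπS2]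
        intro heq
        have heq' : (c * c : Multiplicative ℤ) = Multiplicative.ofAdd k * (d * d) :=
          WithZero.coe_inj.mp heq
        have := congrArg Multiplicative.toAdd heq'
        simp only [toAdd_mul, toAdd_ofAdd] at this
        obtain ⟨m, hm⟩ := hkodd
        omega
      have := v.map_add_of_distinct_val hne
      rw [h, map_zero, hc, hπS2] at this
      rcases max_cases ((c * c : Multiplicative ℤ) : WithZero (Multiplicative ℤ))
        ((Multiplicative.ofAdd k * (d * d) : Multiplicative ℤ) : WithZero (Multiplicative ℤ)) with
        ⟨hmax, -⟩ | ⟨hmax, -⟩ <;> rw [hmax] at this <;>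
        exact WithZero.zero_ne_coe this
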